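/- The one-step bridge transition kernels are consistent with the closed-form marginals: if y_{t-1} ~ N(√ᾱ_{t-1}·y₀ + γ̄_{t-1}·x, (1-ᾱ_{t-1})I) and yₜ | y_{t-1} ~ N(√(1-βₜ)·y_{t-1} + γₜ·x, βₜ·I), then the marginal of yₜ is N(√ᾱₜ·y₀ + γ̄ₜ·x, (1-ᾱₜ)I), where ᾱₜ = (1-βₜ)ᾱ_{t-1} and γ̄ₜ = γₜ + √(1-βₜ)γ̄_{t-1}. -/

import Mathlib

open MeasureTheory ProbabilityTheory Real

open scoped ENNReal NNReal

/-- Pointwise completing-the-square identity for products of Gaussian densities. -/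
lemma gauss_pdf_key (μ₁ μ₂ v₁ v₂ : ℝ) (h₁ : 0 < v₁) (h₂ : 0 < v₂) (t x : ℝ) :
    ((Real.sqrt (2*π*v₁))⁻¹ * Real.exp (-(x-μ₁)^2/(2*v₁))) *
      ((Real.sqrt (2*π*v₂))⁻¹ * Real.exp (-(t-x-μ₂)^2/(2*v₂)))
    = ((Real.sqrt (2*π*(v₁+v₂)))⁻¹ * Real.exp (-(t-(μ₁+μ₂))^2/(2*(v₁+v₂)))) *
      ((Real.sqrt (2*π*(v₁*v₂/(v₁+v₂))))⁻¹ *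
        Real.exp (-(x-(μ₁+v₁*(t-μ₁-μ₂)/(v₁+v₂)))^2/(2*(v₁*v₂/(v₁+v₂))))) := by
  have hπ := Real.pi_pos
  have hs : 0 < v₁ + v₂ := by linarith
  have hnorm : (Real.sqrt (2*π*v₁))⁻¹ * (Real.sqrt (2*π*v₂))⁻¹
      = (Real.sqrt (2*π*(v₁+v₂)))⁻¹ * (Real.sqrt (2*π*(v₁*v₂/(v₁+v₂))))⁻¹ := by
    rw [← mul_inv, ← mul_inv, ← Real.sqrt_mul (by positivity), ← Real.sqrt_mul (by positivity)]
    congr 1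
    field_simp
  have hexp : Real.exp (-(x-μ₁)^2/(2*v₁)) * Real.exp (-(t-x-μ₂)^2/(2*v₂))
      = Real.exp (-(t-(μ₁+μ₂))^2/(2*(v₁+v₂))) *
        Real.exp (-(x-(μ₁+v₁*(t-μ₁-μ₂)/(v₁+v₂)))^2/(2*(v₁*v₂/(v₁+v₂)))) := by
    rw [← Real.exp_add, ← Real.exp_add]
    congr 1
    field_simp
    ring
  rw [mul_mul_mul_comm, hnorm, hexp, mul_mul_mul_comm]

/-- Product form of the completing-the-square identity for `gaussianPDFReal`. -/
lemma gaussianPDFReal_mul_gaussianPDFReal (μ₁ μ₂ : ℝ) (v₁ v₂ : ℝ≥0)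
    (h₁ : v₁ ≠ 0) (h₂ : v₂ ≠ 0) (t x : ℝ) :
    gaussianPDFReal μ₁ v₁ x * gaussianPDFReal μ₂ v₂ (t - x)
      = gaussianPDFReal (μ₁ + μ₂) (v₁ + v₂) t *
        gaussianPDFReal (μ₁ + (v₁ : ℝ) * (t - μ₁ - μ₂) / ((v₁ : ℝ) + v₂))
          (v₁ * v₂ / (v₁ + v₂)) x := by
  have hv₁ : (0 : ℝ) < v₁ := lt_of_le_of_ne v₁.coe_nonneg (by exact_mod_cast (Ne.symm h₁))
  have hv₂ : (0 : ℝ) < v₂ := lt_of_le_of_ne v₂.coe_nonneg (by exact_mod_cast (Ne.symm h₂))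
  have := gauss_pdf_key μ₁ μ₂ (v₁ : ℝ) (v₂ : ℝ) hv₁ hv₂ t x
  simp only [gaussianPDFReal]
  have hcast : ((v₁ * v₂ / (v₁ + v₂) : ℝ≥0) : ℝ) = (v₁ : ℝ) * v₂ / ((v₁ : ℝ) + v₂) := by
    push_cast; ring
  rw [NNReal.coe_add, hcast]
  exact this

/-- The sum map of a product of two (nondegenerate) Gaussian measures is Gaussian. -/
lemma gaussianReal_conv (μ₁ μ₂ : ℝ) (v₁ v₂ : ℝ≥0) (h₁ : v₁ ≠ 0) (h₂ : v₂ ≠ 0) :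
    Measure.map (fun p : ℝ × ℝ => p.1 + p.2)
      ((gaussianReal μ₁ v₁).prod (gaussianReal μ₂ v₂)) = gaussianReal (μ₁ + μ₂) (v₁ + v₂) := by
  have h12 : v₁ + v₂ ≠ 0 := fun h => h₁ (add_eq_zero.mp h).1
  have hw : v₁ * v₂ / (v₁ + v₂) ≠ 0 := by
    rw [ne_eq, div_eq_zero_iff, mul_eq_zero]
    push_neg
    exact ⟨⟨h₁, h₂⟩, h12⟩
  ext s hs
  rw [Measure.map_apply measurable_add hs, Measure.prod_apply (measurable_add hs)]
  have hpre : ∀ x : ℝ, (Prod.mk x ⁻¹' ((fun p : ℝ × ℝ => p.1 + p.2) ⁻¹' s))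
      = (fun y => x + y) ⁻¹' s := fun x => rfl
  have hinner : ∀ x : ℝ, gaussianReal μ₂ v₂ ((fun y => x + y) ⁻¹' s)
      = ∫⁻ t in s, gaussianPDF (μ₂ + x) v₂ t := by
    intro x
    have : gaussianReal μ₂ v₂ ((fun y => x + y) ⁻¹' s)
        = ((gaussianReal μ₂ v₂).map (x + ·)) s := by
      rw [Measure.map_apply (measurable_const_add x) hs]
    rw [this, gaussianReal_map_const_add, gaussianReal_apply _ h₂]
  simp_rw [hpre, hinner]
  have hFmeas : Measurable (Function.uncurry fun x t => gaussianPDF (μ₂ + x) v₂ t) := by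
    apply Measurable.ennreal_ofReal
    have heq : (fun p : ℝ × ℝ => gaussianPDFReal (μ₂ + p.1) v₂ p.2)
        = fun p : ℝ × ℝ => gaussianPDFReal μ₂ v₂ (p.2 - p.1) := by
      funext p; rw [gaussianPDFReal_sub p.2 p.1]
    show Measurable fun p : ℝ × ℝ => gaussianPDFReal (μ₂ + p.1) v₂ p.2
    rw [heq]
    exact (measurable_gaussianPDFReal μ₂ v₂).comp (measurable_snd.sub measurable_fst)
  rw [gaussianReal_of_var_ne_zero _ h₁,
    lintegral_withDensity_eq_lintegral_mul _ (measurable_gaussianPDF _ _)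
      (Measurable.lintegral_prod_right (ν := volume.restrict s)
        (f := fun x t => gaussianPDF (μ₂ + x) v₂ t) hFmeas)]
  simp only [Pi.mul_apply]
  have hswap : ∫⁻ x, gaussianPDF μ₁ v₁ x * ∫⁻ t in s, gaussianPDF (μ₂ + x) v₂ t
      = ∫⁻ t in s, ∫⁻ x, gaussianPDF μ₁ v₁ x * gaussianPDF (μ₂ + x) v₂ t := by
    have hmx : ∀ x : ℝ, Measurable fun t => gaussianPDF (μ₂ + x) v₂ t :=
      fun x => measurable_gaussianPDF _ _
    simp_rw [fun x => (lintegral_const_mul (μ := volume.restrict s) (gaussianPDF μ₁ v₁ x) (hmx x)).symm]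
    exact lintegral_lintegral_swap
      (((measurable_gaussianPDF _ _).comp measurable_fst).mul hFmeas).aemeasurable
  rw [hswap, gaussianReal_apply _ h12]
  refine setLIntegral_congr_fun hs (fun t _ => ?_)
  have hpt : ∀ x : ℝ, gaussianPDF μ₁ v₁ x * gaussianPDF (μ₂ + x) v₂ t
      = ENNReal.ofReal (gaussianPDFReal (μ₁ + μ₂) (v₁ + v₂) t)
        * ENNReal.ofReal (gaussianPDFReal
            (μ₁ + (v₁ : ℝ) * (t - μ₁ - μ₂) / ((v₁ : ℝ) + v₂)) (v₁ * v₂ / (v₁ + v₂)) x) := by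
    intro x
    rw [gaussianPDF, gaussianPDF, ← ENNReal.ofReal_mul (gaussianPDFReal_nonneg _ _ _),
      ← ENNReal.ofReal_mul (gaussianPDFReal_nonneg _ _ _), ← gaussianPDFReal_sub t x,
      gaussianPDFReal_mul_gaussianPDFReal μ₁ μ₂ v₁ v₂ h₁ h₂ t x]
  simp_rw [hpt]
  rw [lintegral_const_mul _ ((measurable_gaussianPDFReal _ _).ennreal_ofReal),
    lintegral_gaussianPDFReal_eq_one _ hw, mul_one]
  rfl

/-- Law of `c * X` for a Gaussian `X`, over an arbitrary measure space. -/
lemma map_cmul {Ω : Type*} [MeasureSpace Ω] {X : Ω → ℝ} (hX : Measurable X)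
    {μ : ℝ} {v : ℝ≥0} (hXl : Measure.map X ℙ = gaussianReal μ v) (c : ℝ) :
    Measure.map (fun ω => c * X ω) ℙ = gaussianReal (c * μ) (NNReal.mk (c^2) (sq_nonneg _) * v) := by
  rw [show (fun ω => c * X ω) = (fun y => c * y) ∘ X from rfl,
    ← Measure.map_map ((measurable_const_mul c : Measurable fun y : ℝ => c * y)) hX, hXl,
    gaussianReal_map_const_mul]

/-- Law of `c * X + b` for a Gaussian `X`, over an arbitrary measure space. -/
lemma map_affine {Ω : Type*} [MeasureSpace Ω] {X : Ω → ℝ} (hX : Measurable X)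
    {μ : ℝ} {v : ℝ≥0} (hXl : Measure.map X ℙ = gaussianReal μ v) (c b : ℝ) :
    Measure.map (fun ω => c * X ω + b) ℙ
      = gaussianReal (c * μ + b) (NNReal.mk (c^2) (sq_nonneg _) * v) := by
  rw [show (fun ω => c * X ω + b) = (fun y => y + b) ∘ (fun ω => c * X ω) from rfl,
    ← Measure.map_map ((measurable_add_const b : Measurable fun y : ℝ => y + b)) (hX.const_mul c),
    map_cmul hX hXl c,
    gaussianReal_map_add_const]

/-- Sum of independent Gaussians is Gaussian. -/
lemma indep_add_gaussian {Ω : Type*} [MeasureSpace Ω] [IsProbabilityMeasure (ℙ : Measure Ω)]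
    {X Z : Ω → ℝ} (hX : Measurable X) (hZ : Measurable Z)
    {μ₁ μ₂ : ℝ} {v₁ v₂ : ℝ≥0} (h₁ : v₁ ≠ 0) (h₂ : v₂ ≠ 0)
    (hXl : Measure.map X ℙ = gaussianReal μ₁ v₁)
    (hZl : Measure.map Z ℙ = gaussianReal μ₂ v₂)
    (h : IndepFun X Z ℙ) :
    Measure.map (fun ω => X ω + Z ω) ℙ = gaussianReal (μ₁ + μ₂) (v₁ + v₂) := by
  have hp : Measure.map (fun ω => (X ω, Z ω)) ℙ
      = (gaussianReal μ₁ v₁).prod (gaussianReal μ₂ v₂) := by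
    rw [← hXl, ← hZl]
    exact (indepFun_iff_map_prod_eq_prod_map_map hX.aemeasurable hZ.aemeasurable).mp h
  calc Measure.map (fun ω => X ω + Z ω) ℙ
      = Measure.map ((fun p : ℝ × ℝ => p.1 + p.2) ∘ fun ω => (X ω, Z ω)) ℙ := rfl
    _ = Measure.map (fun p : ℝ × ℝ => p.1 + p.2) (Measure.map (fun ω => (X ω, Z ω)) ℙ) :=
        (Measure.map_map measurable_add (hX.prodMk hZ)).symm
    _ = _ := by rw [hp, gaussianReal_conv _ _ _ _ h₁ h₂]

/-- one-step bridge kernels are consistent with the closed-form marginals: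
    if y_{t-1} ~ N(√ᾱ_{t-1}·y₀ + γ̄_{t-1}·x, 1-ᾱ_{t-1}) and
    yₜ = √(1-βₜ)·y_{t-1} + γₜ·x + √βₜ·ε with ε ~ N(0,1) independent, then
    yₜ ~ N(√ᾱₜ·y₀ + γ̄ₜ·x, 1-ᾱₜ) with ᾱₜ = (1-βₜ)ᾱ_{t-1}, γ̄ₜ = γₜ + √(1-βₜ)γ̄_{t-1}. -/
theorem stmt13 {Ω : Type*} [MeasureSpace Ω] [IsProbabilityMeasure (ℙ : Measure Ω)]
    (βt αbtm1 γt γbar_tm1 y₀ x : ℝ)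
    (hβ : βt ∈ Set.Ioo (0 : ℝ) 1) (hα : αbtm1 ∈ Set.Ioo (0 : ℝ) 1)
    (Y ε : Ω → ℝ) (hY : Measurable Y) (hε : Measurable ε)
    (hYlaw : Measure.map Y ℙ
      = gaussianReal (Real.sqrt αbtm1 * y₀ + γbar_tm1 * x) (Real.toNNReal (1 - αbtm1)))
    (hεlaw : Measure.map ε ℙ = gaussianReal 0 1)
    (hindep : IndepFun Y ε ℙ) :
    Measure.map (fun ω => Real.sqrt (1 - βt) * Y ω + γt * x + Real.sqrt βt * ε ω) ℙ
      = gaussianReal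
          (Real.sqrt ((1 - βt) * αbtm1) * y₀ + (γt + Real.sqrt (1 - βt) * γbar_tm1) * x)
          (Real.toNNReal (1 - (1 - βt) * αbtm1)) := by
  obtain ⟨hβ0, hβ1⟩ := hβ
  obtain ⟨hα0, hα1⟩ := hα
  have h1β : (0:ℝ) < 1 - βt := by linarith
  have h1α : (0:ℝ) < 1 - αbtm1 := by linarith
  have hne : ∀ a : ℝ≥0, (0:ℝ) < a → a ≠ 0 := fun a ha h => by simp [h] at ha
  have hXlaw := map_affine hY hYlaw (Real.sqrt (1 - βt)) (γt * x)
  have hZlaw := map_cmul hε hεlaw (Real.sqrt βt)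
  have h₁ : (NNReal.mk ((Real.sqrt (1-βt))^2) (sq_nonneg _) * Real.toNNReal (1 - αbtm1) : ℝ≥0) ≠ 0 := by
    refine hne _ ?_
    rw [NNReal.coe_mul, NNReal.coe_mk, Real.coe_toNNReal _ h1α.le, Real.sq_sqrt h1β.le]
    positivity
  have h₂ : (NNReal.mk ((Real.sqrt βt)^2) (sq_nonneg _) * 1 : ℝ≥0) ≠ 0 := by
    refine hne _ ?_
    rw [NNReal.coe_mul, NNReal.coe_mk, NNReal.coe_one, Real.sq_sqrt hβ0.le]
    positivity
  have hInd : IndepFun (fun ω => Real.sqrt (1 - βt) * Y ω + γt * x)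
      (fun ω => Real.sqrt βt * ε ω) ℙ :=
    hindep.comp (φ := fun y => Real.sqrt (1 - βt) * y + γt * x)
      (ψ := fun y => Real.sqrt βt * y)
      ((measurable_id.const_mul _).add_const _) (measurable_id.const_mul _)
  have hsum := indep_add_gaussian (hX := (hY.const_mul _).add_const _)
    (hZ := hε.const_mul _) h₁ h₂ hXlaw hZlaw hInd
  rw [hsum]
  have hmean : Real.sqrt (1-βt) * (Real.sqrt αbtm1 * y₀ + γbar_tm1 * x) + γt * x
      + Real.sqrt βt * 0
      = Real.sqrt ((1 - βt) * αbtm1) * y₀ + (γt + Real.sqrt (1 - βt) * γbar_tm1) * x := by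
    rw [Real.sqrt_mul h1β.le]
    ring
  have hvar : (NNReal.mk ((Real.sqrt (1-βt))^2) (sq_nonneg _) * Real.toNNReal (1 - αbtm1)
      + NNReal.mk ((Real.sqrt βt)^2) (sq_nonneg _) * 1 : ℝ≥0)
      = Real.toNNReal (1 - (1 - βt) * αbtm1) := by
    apply NNReal.coe_injective
    rw [NNReal.coe_add, NNReal.coe_mul, NNReal.coe_mul, NNReal.coe_mk, NNReal.coe_mk,
      NNReal.coe_one, Real.coe_toNNReal _ h1α.le, Real.sq_sqrt h1β.le, Real.sq_sqrt hβ0.le,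
      Real.coe_toNNReal _ (by nlinarith)]
    ring
  rw [hmean, hvar]
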